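/- Let H be a real separable Hilbert space and S : H × H → ℝ a continuous symmetric bilinear form with induced map 𝒮 : H → H*. Suppose u₁,…,uₙ ∈ H satisfy 𝒮uᵢ = φᵢ for i = 1,…,n, where φ₁,…,φₙ are linearly independent continuous linear functionals on H. Let c be the number of non-positive eigenvalues, counted with multiplicity, of the real symmetric n×n matrix (S(uᵢ,uⱼ))ᵢⱼ. Then MI^{φ₁,…,φₙ}(S) = MI(S) − c; in particular MI(S) ≥ c. -/

import Mathlib

/-- The Morse index of the continuous bilinear form `S` restricted to the subspace `G`:
the supremum of dimensions of subspaces of `G` on which `S` is negative definite. -/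
noncomputable def morseIndexOn {H : Type*} [NormedAddCommGroup H] [InnerProductSpace ℝ H]
    (S : H →L[ℝ] H →L[ℝ] ℝ) (G : Submodule ℝ H) : ℕ :=
  sSup {n : ℕ | ∃ W : Submodule ℝ H, W ≤ G ∧ Module.finrank ℝ W = n ∧
    ∀ u ∈ W, u ≠ 0 → S u u < 0}

/-- The (unconstrained) Morse index `MI(S)`. -/
noncomputable def morseIndex {H : Type*} [NormedAddCommGroup H] [InnerProductSpace ℝ H]
    (S : H →L[ℝ] H →L[ℝ] ℝ) : ℕ :=
  morseIndexOn S ⊤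


section Aux
set_option maxHeartbeats 1000000
variable {H : Type*} [NormedAddCommGroup H] [InnerProductSpace ℝ H]

lemma negdef_fd (S : H →L[ℝ] H →L[ℝ] ℝ)
    (hfin : BddAbove {n : ℕ | ∃ W : Submodule ℝ H, Module.finrank ℝ W = n ∧
      ∀ u ∈ W, u ≠ 0 → S u u < 0})
    (W : Submodule ℝ H) (hW : ∀ u ∈ W, u ≠ 0 → S u u < 0) :
    FiniteDimensional ℝ W := by
  obtain ⟨b, hb⟩ := hfin
  by_contra hnf
  haveI : Module.Free ℝ W := Module.Free.of_divisionRing ℝ W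
  have hrank : ((b + 1 : ℕ) : Cardinal) ≤ Module.rank ℝ W := by
    have h1 : ¬ Module.rank ℝ W < Cardinal.aleph0 := by
      rw [Module.rank_lt_aleph0_iff]; exact hnf
    exact le_trans (Cardinal.nat_lt_aleph0 (b+1)).le (le_of_not_gt h1)
  obtain ⟨f, hf⟩ := exists_linearIndependent_of_le_rank hrank
  have hg : LinearIndependent ℝ (W.subtype ∘ f) :=
    hf.map' W.subtype (Submodule.ker_subtype W)
  have hmem : (b + 1) ∈ {n : ℕ | ∃ W : Submodule ℝ H, Module.finrank ℝ W = n ∧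
      ∀ u ∈ W, u ≠ 0 → S u u < 0} := by
    refine ⟨Submodule.span ℝ (Set.range (W.subtype ∘ f)), ?_, ?_⟩
    · rw [finrank_span_eq_card hg, Fintype.card_fin]
    · intro x hx hx0
      have hxW : x ∈ W := by
        have : Submodule.span ℝ (Set.range (W.subtype ∘ f)) ≤ W := by
          rw [Submodule.span_le]
          rintro _ ⟨i, rfl⟩; exact (f i).2
        exact this hx
      exact hW x hxW hx0
  exact absurd (hb hmem) (by omega)

lemma exists_alpha (S : H →L[ℝ] H →L[ℝ] ℝ) (W : Submodule ℝ H)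
    [FiniteDimensional ℝ W] (hW : ∀ u ∈ W, u ≠ 0 → S u u < 0) :
    ∃ α : ℝ, 0 < α ∧ ∀ u ∈ W, S u u ≤ -α * ‖u‖^2 := by
  by_cases hbot : ∀ u ∈ W, u = (0:H)
  · exact ⟨1, one_pos, fun u hu => by simp [hbot u hu]⟩
  push_neg at hbot
  obtain ⟨x, hxW, hx0⟩ := hbot
  have hnx : ‖x‖ ≠ 0 := norm_ne_zero_iff.2 hx0
  have hsph : (‖x‖⁻¹ • ⟨x, hxW⟩ : W) ∈ Metric.sphere (0 : W) 1 := by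
    rw [mem_sphere_zero_iff_norm]
    rw [norm_smul]
    show ‖‖x‖⁻¹‖ * ‖x‖ = 1
    rw [norm_inv, norm_norm, inv_mul_cancel₀ hnx]
  have hcomp : IsCompact (Metric.sphere (0 : W) 1) := isCompact_sphere _ _
  have hcont : Continuous (fun w : W => S w w) := by
    continuity
  obtain ⟨w₀, hw₀mem, hw₀max⟩ := hcomp.exists_isMaxOn ⟨_, hsph⟩ hcont.continuousOn
  have hw₀norm : ‖(w₀ : H)‖ = 1 := mem_sphere_zero_iff_norm.1 hw₀mem
  have hw₀0 : (w₀ : H) ≠ 0 := by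
    intro h; rw [h] at hw₀norm; simp at hw₀norm
  have hneg : S w₀ w₀ < 0 := hW _ w₀.2 hw₀0
  refine ⟨-(S w₀ w₀), by linarith, ?_⟩
  intro u huW
  by_cases hu0 : u = 0
  · simp [hu0]
  · have hnu : ‖u‖ ≠ 0 := norm_ne_zero_iff.2 hu0
    set w : W := ‖u‖⁻¹ • ⟨u, huW⟩ with hw
    have hwsph : w ∈ Metric.sphere (0 : W) 1 := by
      rw [mem_sphere_zero_iff_norm, hw, norm_smul]
      show ‖‖u‖⁻¹‖ * ‖u‖ = 1
      rw [norm_inv, norm_norm, inv_mul_cancel₀ hnu]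
    have hle : S w w ≤ S w₀ w₀ := hw₀max hwsph
    have hexp : S (w : H) (w : H) = ‖u‖⁻¹ * ‖u‖⁻¹ * S u u := by
      simp only [hw, Submodule.coe_smul, map_smul, smul_eq_mul,
        ContinuousLinearMap.smul_apply]
      ring
    rw [hexp] at hle
    have h2 : (0:ℝ) < ‖u‖^2 := by positivity
    have heq : S u u = ‖u‖^2 * (‖u‖⁻¹ * ‖u‖⁻¹ * S u u) := by
      field_simp
    rw [heq]
    calc ‖u‖^2 * (‖u‖⁻¹ * ‖u‖⁻¹ * S u u) ≤ ‖u‖^2 * S w₀ w₀ :=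
          mul_le_mul_of_nonneg_left hle (le_of_lt h2)
      _ = -(-(S w₀ w₀)) * ‖u‖^2 := by ring

lemma exists_dual_family {ι : Type*} [Fintype ι] [DecidableEq ι]
    (g : ι → (H →L[ℝ] ℝ)) (hg : LinearIndependent ℝ g) :
    ∃ d : ι → H, ∀ k l, g k (d l) = if k = l then 1 else 0 := by
  classical
  set Φ : H →ₗ[ℝ] (ι → ℝ) := LinearMap.pi (fun k => (g k : H →ₗ[ℝ] ℝ)) with hΦ
  have hsurj : LinearMap.range Φ = ⊤ := by
    by_contra hne
    obtain ⟨ψ, hψ0, hψ⟩ := Submodule.exists_dual_map_eq_bot_of_lt_top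
      (lt_top_iff_ne_top.2 hne) inferInstance
    have hψy : ∀ y : ι → ℝ, ψ y = ∑ k, y k * ψ (Pi.single k 1) := by
      intro y
      have hy : y = ∑ k, y k • (Pi.single k 1 : ι → ℝ) := by
        funext j
        simp [Pi.single_apply, Finset.sum_ite_eq' Finset.univ j]
      conv_lhs => rw [hy]
      simp [map_sum, map_smul, smul_eq_mul]
    have key : ∀ x : H, ∑ k, ψ (Pi.single k 1) * g k x = 0 := by
      intro x
      have hmem : ψ (Φ x) ∈ Submodule.map ψ (LinearMap.range Φ) :=
        Submodule.mem_map_of_mem ⟨x, rfl⟩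
      rw [hψ] at hmem
      have h0 : ψ (Φ x) = 0 := hmem
      rw [hψy (Φ x)] at h0
      have : ∀ k, (Φ x) k = g k x := fun k => rfl
      simp only [this, mul_comm] at h0
      simpa [mul_comm] using h0
    have hcoef : ∀ k, ψ (Pi.single k 1) = 0 := by
      have h0 : ∑ k, ψ (Pi.single k 1) • g k = 0 := by
        ext x
        simpa using key x
      exact Fintype.linearIndependent_iff.1 hg _ h0
    apply hψ0
    apply LinearMap.ext
    intro y
    rw [hψy y]
    simp [hcoef]
  have hd : ∀ l : ι, ∃ x : H, Φ x = Pi.single l 1 := by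
    intro l
    have : (Pi.single l (1:ℝ)) ∈ LinearMap.range Φ := hsurj ▸ Submodule.mem_top
    exact this
  choose d hdd using hd
  refine ⟨d, fun k l => ?_⟩
  have h := congrFun (hdd l) k
  have h2 : (Φ (d l)) k = g k (d l) := rfl
  rw [h2] at h
  rw [h, Pi.single_apply]

end Aux

section Step1
variable {H : Type*} [NormedAddCommGroup H] [InnerProductSpace ℝ H]

lemma arith_neg (α D Sn t a r b2 Q : ℝ) (hα : 0 < α) (hD0 : 0 < D) (hSn0 : 0 ≤ Sn)
    (ht0 : 0 < t) (ht1 : t*(Sn*D) ≤ 1) (ht2 : t*(Sn^2*D) ≤ α/4)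
    (ha0 : 0 ≤ a) (hr0 : 0 ≤ r) (hb20 : 0 ≤ b2)
    (br2 : r^2 ≤ D*b2) (hpos : 0 < a ∨ 0 < b2)
    (hQ : Q ≤ -α*a^2 + 2*t*(Sn*a*r) - 2*t*b2 + t^2*(Sn*r^2)) : Q < 0 := by
  have hc1 : t^2*(Sn*r^2) ≤ t*b2 := by
    have i1 : t^2*Sn*(r^2) ≤ t^2*Sn*(D*b2) :=
      mul_le_mul_of_nonneg_left br2 (mul_nonneg (sq_nonneg t) hSn0)
    have i2 : (t*(Sn*D))*(t*b2) ≤ 1*(t*b2) :=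
      mul_le_mul_of_nonneg_right ht1 (mul_nonneg ht0.le hb20)
    nlinarith [i1, i2]
  have hapos : 0 < a → Q < 0 := by
    intro hA
    have hkey2 : -α*a^2 + 2*t*(Sn*a*r) - t*b2 < 0 := by
      have hDmul : D*(-α*a^2 + 2*t*(Sn*a*r) - t*b2) < 0 := by
        have e : D*(-α*a^2 + 2*t*(Sn*a*r) - t*b2)
            = -(α*D*a^2) + 2*t*Sn*D*a*r - t*(D*b2) := by ring
        rw [e]
        have i1 : t*r^2 ≤ t*(D*b2) := mul_le_mul_of_nonneg_left br2 ht0.le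
        have i2 : 0 ≤ t*(r - Sn*D*a)^2 := mul_nonneg ht0.le (sq_nonneg _)
        have i3 : t*(Sn^2*D)*a^2 ≤ (α/4)*a^2 :=
          mul_le_mul_of_nonneg_right ht2 (sq_nonneg a)
        have i4 : D*(t*(Sn^2*D)*a^2) ≤ D*((α/4)*a^2) :=
          mul_le_mul_of_nonneg_left i3 hD0.le
        have i5 : 0 < α*(D*(a*a)) := mul_pos hα (mul_pos hD0 (mul_pos hA hA))
        nlinarith [i1, i2, i4, i5]
      by_contra hcon
      push_neg at hcon
      nlinarith [mul_nonneg hD0.le hcon]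
    linarith [hQ, hc1, hkey2]
  rcases hpos with hA | hB
  · exact hapos hA
  · by_cases hA : 0 < a
    · exact hapos hA
    · have ha0' : a = 0 := le_antisymm (not_lt.1 hA) ha0
      rw [ha0'] at hQ
      have hfin : -α * 0^2 + 2*t*(Sn*0*r) - 2*t*b2 + t^2*(Sn*r^2)
          ≤ -2*t*b2 + t*b2 := by nlinarith [hc1]
      have : 0 < t*b2 := mul_pos ht0 hB
      linarith [hQ, hfin]

set_option maxHeartbeats 1000000 in
open Finset in
lemma step_ge (S : H →L[ℝ] H →L[ℝ] ℝ) (hsym : ∀ u v : H, S u v = S v u)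
    {n : ℕ} (z : Fin n → H) (lam : Fin n → ℝ)
    (hzz : ∀ k l, S (z k) (z l) = if k = l then lam l else 0)
    (hzi : LinearIndependent ℝ (fun k : {k : Fin n // lam k ≤ 0} => S (z k.1)))
    (G : Submodule ℝ H) (hG : ∀ v : H, v ∈ G → ∀ k, S (z k) v = 0)
    (W : Submodule ℝ H) [FiniteDimensional ℝ W] (hWG : W ≤ G)
    (hW : ∀ u ∈ W, u ≠ 0 → S u u < 0) :
    ∃ W' : Submodule ℝ H, (∀ u ∈ W', u ≠ 0 → S u u < 0) ∧
      Module.finrank ℝ W' =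
        Module.finrank ℝ W + Fintype.card {k : Fin n // lam k ≤ 0} := by
  classical
  obtain ⟨d, hd⟩ := exists_dual_family (fun k : {k : Fin n // lam k ≤ 0} => S (z k.1)) hzi
  obtain ⟨α, hα, hαW⟩ := exists_alpha S W hW
  set D : ℝ := (∑ k : {k : Fin n // lam k ≤ 0}, ‖d k‖^2) + 1 with hD
  have hD0 : 0 < D := by positivity
  set Sn : ℝ := ‖S‖ with hSn
  have hSn0 : (0:ℝ) ≤ Sn := norm_nonneg S
  set t : ℝ := min (1/(Sn*D + 1)) (α/(2*(2*Sn^2*D + 1))) with ht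
  have ht0 : 0 < t := lt_min (by positivity) (by positivity)
  have ht1 : t * (Sn * D) ≤ 1 := by
    have h : t ≤ 1/(Sn*D+1) := min_le_left _ _
    have h2 : (0:ℝ) < Sn*D + 1 := by positivity
    have h3 : (0:ℝ) ≤ Sn*D := by positivity
    calc t * (Sn*D) ≤ (1/(Sn*D+1)) * (Sn*D) := mul_le_mul_of_nonneg_right h h3
      _ ≤ 1 := by rw [div_mul_eq_mul_div, one_mul, div_le_one h2]; linarith
  have ht2 : t * (Sn^2 * D) ≤ α/4 := by
    have h : t ≤ α/(2*(2*Sn^2*D + 1)) := min_le_right _ _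
    have h2 : (0:ℝ) < 2*(2*Sn^2*D+1) := by positivity
    have h3 : (0:ℝ) ≤ Sn^2*D := by positivity
    have h4 := mul_le_mul_of_nonneg_right h h3
    have h5 : α/(2*(2*Sn^2*D + 1)) * (Sn^2*D) ≤ α/4 := by
      rw [div_mul_eq_mul_div, div_le_div_iff₀ h2 (by norm_num)]
      nlinarith
    linarith
  set y : {k : Fin n // lam k ≤ 0} → H := fun k => z k.1 - t • d k with hy
  set L : (W × ({k : Fin n // lam k ≤ 0} → ℝ)) →ₗ[ℝ] H :=
    (W.subtype).coprod ((Fintype.linearCombination ℝ y)) with hL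
  have hLapp : ∀ (w : W) (ξ : {k : Fin n // lam k ≤ 0} → ℝ),
      L (w, ξ) = (w : H) + ∑ k, ξ k • y k := by
    intro w ξ
    simp [hL, LinearMap.coprod_apply, Fintype.linearCombination_apply]
  have key : ∀ (w : W) (ξ : {k : Fin n // lam k ≤ 0} → ℝ), (w, ξ) ≠ 0 →
      S (L (w, ξ)) (L (w, ξ)) < 0 := by
    intro w ξ hp
    set x : H := (w : H) with hx
    set s : H := ∑ k, ξ k • y k with hs
    set a : ℝ := ‖x‖ with ha
    set r : ℝ := ∑ k, |ξ k| * ‖d k‖ with hr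
    set b2 : ℝ := ∑ k, (ξ k)^2 with hb2
    have ha0 : 0 ≤ a := norm_nonneg x
    have hr0 : 0 ≤ r := Finset.sum_nonneg fun k _ => by positivity
    have hb20 : 0 ≤ b2 := Finset.sum_nonneg fun k _ => sq_nonneg _
    have hxz : ∀ k : Fin n, S x (z k) = 0 := by
      intro k
      rw [hsym]
      exact hG x (hWG w.2) k
    have e1 : S (L (w, ξ)) (L (w, ξ)) = S x x + 2 * S x s + S s s := by
      rw [hLapp]
      simp only [map_add, ContinuousLinearMap.add_apply, ← hx, ← hs]
      rw [hsym s x]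
      ring
    have e2 : S x s = -t * ∑ k, ξ k * S x (d k) := by
      rw [hs, map_sum, Finset.mul_sum]
      apply Finset.sum_congr rfl
      intro k _
      rw [map_smul, smul_eq_mul]
      simp only [hy, map_sub, map_smul, smul_eq_mul, hxz k.1,
        ContinuousLinearMap.coe_sub', Pi.sub_apply]
      ring
    have hyy : ∀ k l, S (y k) (y l)
        = (if k = l then lam l.1 - 2*t else 0) + t^2 * S (d k) (d l) := by
      intro k l
      have expand : S (y k) (y l) = S (z k.1) (z l.1) - t * S (z k.1) (d l)
          - t * S (d k) (z l.1) + t^2 * S (d k) (d l) := by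
        simp only [hy, map_sub, map_smul, smul_eq_mul, ContinuousLinearMap.coe_smul',
          Pi.smul_apply, ContinuousLinearMap.coe_sub', Pi.sub_apply]
        ring
      rw [expand, hzz, hsym (d k) (z l.1), hd k l, hd l k]
      by_cases h : k = l
      · subst h
        simp
        ring
      · have h1 : k.1 ≠ l.1 := fun hh => h (Subtype.ext hh)
        have h2 : l ≠ k := fun hh => h hh.symm
        simp only [if_neg h, if_neg h1, if_neg h2]
        ring
    have h0a : ∀ q : H, S s q = ∑ k, ξ k * S (y k) q := by
      intro q
      rw [hs, map_sum, ContinuousLinearMap.sum_apply]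
      apply Finset.sum_congr rfl
      intro k _
      rw [map_smul, ContinuousLinearMap.smul_apply, smul_eq_mul]
    have h0 : S s s = ∑ k, ∑ l, (ξ k * ξ l) * S (y k) (y l) := by
      rw [h0a s]
      apply Finset.sum_congr rfl
      intro k _
      rw [hs, map_sum, Finset.mul_sum]
      apply Finset.sum_congr rfl
      intro l _
      rw [map_smul, smul_eq_mul]
      ring
    have e3 : S s s = (∑ k, (ξ k)^2 * lam k.1) - 2*t*b2
        + t^2 * (∑ k, ∑ l, (ξ k * ξ l) * S (d k) (d l)) := by
      rw [h0]
      have h1 : ∀ k, ∑ l, (ξ k * ξ l) * S (y k) (y l)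
          = ((ξ k)^2 * lam k.1 - 2*t*(ξ k)^2)
            + t^2 * ∑ l, (ξ k * ξ l) * S (d k) (d l) := by
        intro k
        have hterm : ∀ l, (ξ k * ξ l) * S (y k) (y l)
            = (if k = l then (ξ k)^2 * lam l.1 - 2*t*(ξ k)^2 else 0)
              + t^2 * ((ξ k * ξ l) * S (d k) (d l)) := by
          intro l
          rw [hyy]
          by_cases h : k = l
          · subst h; simp; ring
          · simp only [if_neg h]; ring
        rw [Finset.sum_congr rfl (fun l _ => hterm l), Finset.sum_add_distrib,
          Finset.sum_ite_eq, Finset.mul_sum]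
        simp
      rw [Finset.sum_congr rfl (fun k _ => h1 k), Finset.sum_add_distrib,
        Finset.sum_sub_distrib]
      have hbb : ∑ k, 2*t*(ξ k)^2 = 2*t*b2 := by
        rw [hb2, Finset.mul_sum]
      rw [hbb]
      congr 1
      rw [Finset.mul_sum]
    have habs : ∀ (p q : H), |S p q| ≤ Sn * ‖p‖ * ‖q‖ := by
      intro p q
      have := S.le_opNorm₂ p q
      rwa [Real.norm_eq_abs] at this
    have bcross : |∑ k, ξ k * S x (d k)| ≤ Sn * a * r := by
      calc |∑ k, ξ k * S x (d k)| ≤ ∑ k, |ξ k * S x (d k)| :=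
            Finset.abs_sum_le_sum_abs _ _
        _ ≤ ∑ k, |ξ k| * (Sn * a * ‖d k‖) := by
            apply Finset.sum_le_sum
            intro k _
            rw [abs_mul]
            exact mul_le_mul_of_nonneg_left (habs x (d k)) (abs_nonneg _)
        _ = Sn * a * r := by
            rw [hr, Finset.mul_sum]
            apply Finset.sum_congr rfl
            intro k _; ring
    have bquad : |∑ k, ∑ l, (ξ k * ξ l) * S (d k) (d l)| ≤ Sn * r^2 := by
      calc |∑ k, ∑ l, (ξ k * ξ l) * S (d k) (d l)|
          ≤ ∑ k, |∑ l, (ξ k * ξ l) * S (d k) (d l)| := Finset.abs_sum_le_sum_abs _ _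
        _ ≤ ∑ k, ∑ l, |(ξ k * ξ l) * S (d k) (d l)| := by
            apply Finset.sum_le_sum
            intro k _
            exact Finset.abs_sum_le_sum_abs _ _
        _ ≤ ∑ k, ∑ l, (|ξ k| * ‖d k‖) * ((|ξ l| * ‖d l‖) * Sn) := by
            apply Finset.sum_le_sum; intro k _
            apply Finset.sum_le_sum; intro l _
            rw [abs_mul, abs_mul]
            have h2 : |ξ k| * |ξ l| * |S (d k) (d l)|
                ≤ |ξ k| * |ξ l| * (Sn * ‖d k‖ * ‖d l‖) :=
              mul_le_mul_of_nonneg_left (habs (d k) (d l)) (by positivity)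
            calc |ξ k| * |ξ l| * |S (d k) (d l)|
                ≤ |ξ k| * |ξ l| * (Sn * ‖d k‖ * ‖d l‖) := h2
              _ = (|ξ k| * ‖d k‖) * ((|ξ l| * ‖d l‖) * Sn) := by ring
        _ = Sn * r^2 := by
            rw [← Finset.sum_mul_sum, ← Finset.sum_mul, ← hr]
            ring
    have blam : ∑ k, (ξ k)^2 * lam k.1 ≤ 0 := by
      apply Finset.sum_nonpos
      intro k _
      exact mul_nonpos_of_nonneg_of_nonpos (sq_nonneg _) k.2
    have br2 : r^2 ≤ D * b2 := by
      have h := Finset.sum_mul_sq_le_sq_mul_sq Finset.univ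
        (fun k : {k : Fin n // lam k ≤ 0} => |ξ k|) (fun k => ‖d k‖)
      have h2 : ∑ k : {k : Fin n // lam k ≤ 0}, |ξ k|^2 = b2 := by
        rw [hb2]; apply Finset.sum_congr rfl; intro k _; rw [sq_abs]
      rw [h2] at h
      calc r^2 ≤ b2 * ∑ k : {k : Fin n // lam k ≤ 0}, ‖d k‖^2 := by rw [hr]; exact h
        _ ≤ D * b2 := by rw [hD]; nlinarith
    have bsxx : S x x ≤ -α * a^2 := hαW x w.2
    have hQ : S (L (w, ξ)) (L (w, ξ))
        ≤ -α * a^2 + 2*t*(Sn*a*r) - 2*t*b2 + t^2*(Sn*r^2) := by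
      rw [e1, e2, e3]
      have c1 : 2 * (-t * ∑ k, ξ k * S x (d k)) ≤ 2*t*(Sn*a*r) := by
        have h := neg_abs_le (∑ k, ξ k * S x (d k))
        nlinarith [bcross, abs_nonneg (∑ k, ξ k * S x (d k))]
      have c2 : t^2 * (∑ k, ∑ l, (ξ k * ξ l) * S (d k) (d l)) ≤ t^2*(Sn*r^2) := by
        have h := le_abs_self (∑ k, ∑ l, (ξ k * ξ l) * S (d k) (d l))
        nlinarith [sq_nonneg t]
      linarith
    have hpos : 0 < a ∨ 0 < b2 := by
      rcases not_and_or.1 (Prod.mk_eq_zero.not.1 hp) with hw0 | hξ0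
      · left
        have hxne : x ≠ 0 := fun h => hw0 (Submodule.coe_eq_zero.1 h)
        exact norm_pos_iff.2 hxne
      · right
        obtain ⟨k, hk⟩ : ∃ k, ξ k ≠ 0 := by
          by_contra hcon
          push_neg at hcon
          exact hξ0 (funext hcon)
        have h1 : (ξ k)^2 ≤ b2 :=
          Finset.single_le_sum (fun i _ => sq_nonneg (ξ i)) (Finset.mem_univ k)
        have h2 : 0 < (ξ k)^2 := by positivity
        linarith
    clear_value t D Sn a r b2
    exact arith_neg α D Sn t a r b2 _ hα hD0 hSn0 ht0 ht1 ht2 ha0 hr0 hb20 br2 hpos hQ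
  have hLinj : Function.Injective L := by
    intro p q hpq
    by_contra hne
    have hsub : L (p - q) = 0 := by rw [map_sub, hpq, sub_self]
    have hne0 : ((p - q).1, (p - q).2) ≠ 0 := by
      simp only [Prod.mk.eta]
      exact sub_ne_zero.2 hne
    have hkey := key (p - q).1 (p - q).2 hne0
    simp only [Prod.mk.eta] at hkey
    rw [hsub] at hkey
    simp at hkey
  refine ⟨LinearMap.range L, ?_, ?_⟩
  · rintro v ⟨p, rfl⟩ hv0
    have hp0 : ((p.1, p.2) : W × ({k : Fin n // lam k ≤ 0} → ℝ)) ≠ 0 := by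
      simp only [Prod.mk.eta]
      rintro rfl
      exact hv0 (map_zero L)
    have hkey := key p.1 p.2 hp0
    simpa only [Prod.mk.eta] using hkey
  · rw [LinearMap.finrank_range_of_inj hLinj]
    rw [Module.finrank_prod, Module.finrank_pi]


open Finset in
lemma step_le (S : H →L[ℝ] H →L[ℝ] ℝ) (hsym : ∀ u v : H, S u v = S v u)
    {n : ℕ} (z : Fin n → H) (lam : Fin n → ℝ)
    (hzz : ∀ k l, S (z k) (z l) = if k = l then lam l else 0)
    (G : Submodule ℝ H) (hG : ∀ v : H, v ∈ G ↔ ∀ k, S (z k) v = 0)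
    (W : Submodule ℝ H) [FiniteDimensional ℝ W] (hW : ∀ u ∈ W, u ≠ 0 → S u u < 0) :
    ∃ W' : Submodule ℝ H, W' ≤ G ∧ (∀ u ∈ W', u ≠ 0 → S u u < 0) ∧
      Module.finrank ℝ W ≤ Module.finrank ℝ W' + Fintype.card {k : Fin n // lam k ≤ 0} := by
  classical
  set P : Finset (Fin n) := Finset.univ.filter (fun k => 0 < lam k) with hP
  set T : H →ₗ[ℝ] H :=
    LinearMap.id - ∑ k ∈ P, ((lam k)⁻¹ • (S (z k) : H →ₗ[ℝ] ℝ)).smulRight (z k) with hT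
  have hTapp : ∀ v : H, T v = v - ∑ k ∈ P, ((lam k)⁻¹ * S (z k) v) • z k := by
    intro v
    simp [hT, LinearMap.sub_apply, LinearMap.sum_apply, LinearMap.smulRight_apply,
      smul_smul]
  -- S (z k) (T v) for all k
  have hTz : ∀ (k : Fin n) (v : H),
      S (z k) (T v) = if k ∈ P then 0 else S (z k) v := by
    intro k v
    rw [hTapp]
    rw [map_sub, map_sum]
    have hterm : ∀ l ∈ P, S (z k) (((lam l)⁻¹ * S (z l) v) • z l)
        = if k = l then (lam l)⁻¹ * S (z l) v * lam l else 0 := by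
      intro l hl
      rw [map_smul, smul_eq_mul, hzz k l]
      by_cases h : k = l <;> simp [h]
    rw [Finset.sum_congr rfl hterm, Finset.sum_ite_eq]
    by_cases hk : k ∈ P
    · simp only [hk, if_true]
      have hlk : lam k ≠ 0 := by
        have : 0 < lam k := (Finset.mem_filter.1 hk).2
        linarith
      field_simp
      ring
    · simp [hk]
  have hTzP : ∀ k ∈ P, ∀ v : H, S (z k) (T v) = 0 := by
    intro k hk v; rw [hTz]; simp [hk]
  have hTzNP : ∀ (k : Fin n), k ∉ P → ∀ v : H, S (z k) (T v) = S (z k) v := by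
    intro k hk v; rw [hTz]; simp [hk]
  -- quadratic form decreases
  have expand2 : ∀ x v : H, S x (T v)
      = S x v - ∑ k ∈ P, ((lam k)⁻¹ * S (z k) v) * S x (z k) := by
    intro x v
    rw [hTapp, map_sub, map_sum]
    congr 1
    apply Finset.sum_congr rfl
    intro l _
    rw [map_smul, smul_eq_mul]
  have hTT : ∀ v : H, S (T v) (T v) = S v v - ∑ k ∈ P, (lam k)⁻¹ * (S (z k) v)^2 := by
    intro v
    have h1 : S (T v) (T v) = S (T v) v := by
      rw [expand2]
      have : ∀ l ∈ P, ((lam l)⁻¹ * S (z l) v) * S (T v) (z l) = 0 := by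
        intro l hl
        rw [hsym (T v) (z l), hTzP l hl v, mul_zero]
      rw [Finset.sum_congr rfl this, Finset.sum_const_zero, sub_zero]
    rw [h1, hsym (T v) v, expand2 v v]
    congr 1
    apply Finset.sum_congr rfl
    intro l hl
    rw [hsym v (z l)]
    ring
  have hle : ∀ v : H, S (T v) (T v) ≤ S v v := by
    intro v
    rw [hTT]
    have : (0:ℝ) ≤ ∑ k ∈ P, (lam k)⁻¹ * (S (z k) v)^2 := by
      apply Finset.sum_nonneg
      intro k hk
      have h0 : 0 < lam k := (Finset.mem_filter.1 hk).2
      positivity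
    linarith
  -- injectivity of T on W
  have hTinj : ∀ v : H, v ∈ W → T v = 0 → v = 0 := by
    intro v hv hTv
    by_contra hv0
    have h1 : S v v < 0 := hW v hv hv0
    have h2 := hTT v
    rw [hTv] at h2
    simp only [map_zero, ContinuousLinearMap.zero_apply] at h2
    have : (0:ℝ) ≤ ∑ k ∈ P, (lam k)⁻¹ * (S (z k) v)^2 := by
      apply Finset.sum_nonneg
      intro k hk
      have h0 : 0 < lam k := (Finset.mem_filter.1 hk).2
      positivity
    linarith
  -- the kernel of the "negative constraints" on W
  set F : W →ₗ[ℝ] ({k : Fin n // lam k ≤ 0} → ℝ) :=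
    LinearMap.pi (fun k => (S (z k.1) : H →ₗ[ℝ] ℝ) ∘ₗ W.subtype) with hF
  set K : Submodule ℝ W := LinearMap.ker F with hK
  set J : K →ₗ[ℝ] H := T ∘ₗ (W.subtype ∘ₗ K.subtype) with hJ
  have hJapp : ∀ x : K, J x = T ((x : W) : H) := fun x => rfl
  have hJinj : Function.Injective J := by
    intro x y hxy
    have h0 : J (x - y) = 0 := by rw [map_sub, hxy, sub_self]
    rw [hJapp] at h0
    have hmem : (((x - y : K) : W) : H) ∈ W := ((x - y : K) : W).2
    have := hTinj _ hmem h0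
    ext
    exact sub_eq_zero.1 (by exact_mod_cast this)
  refine ⟨LinearMap.range J, ?_, ?_, ?_⟩
  · rintro v ⟨x, rfl⟩
    rw [hG]
    intro k
    rw [hJapp]
    by_cases hk : k ∈ P
    · exact hTzP k hk _
    · rw [hTzNP k hk]
      have hx : F (x : W) = 0 := x.2
      have := congrFun hx ⟨k, by
        have : ¬ 0 < lam k := by
          intro h; exact hk (Finset.mem_filter.2 ⟨Finset.mem_univ k, h⟩)
        linarith⟩
      exact this
  · rintro v ⟨x, rfl⟩ hv0
    rw [hJapp] at hv0 ⊢
    set xv : H := ((x : W) : H) with hxv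
    have hxv0 : xv ≠ 0 := by
      intro h
      apply hv0
      rw [h, map_zero]
    calc S (T xv) (T xv) ≤ S xv xv := hle xv
      _ < 0 := hW xv (x : W).2 hxv0
  · have h1 : Module.finrank ℝ (LinearMap.range J) = Module.finrank ℝ K :=
      LinearMap.finrank_range_of_inj hJinj
    have h2 : Module.finrank ℝ (LinearMap.range F) + Module.finrank ℝ K
        = Module.finrank ℝ W := LinearMap.finrank_range_add_finrank_ker F
    have h3 : Module.finrank ℝ (LinearMap.range F)
        ≤ Fintype.card {k : Fin n // lam k ≤ 0} := by
      have := Submodule.finrank_le (LinearMap.range F)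
      rwa [Module.finrank_pi ℝ] at this
    omega

end Step1

set_option maxHeartbeats 1000000 in
theorem morse_index_with_several_constraints
    {H : Type*} [NormedAddCommGroup H] [InnerProductSpace ℝ H] [CompleteSpace H]
    [TopologicalSpace.SeparableSpace H]
    (S : H →L[ℝ] H →L[ℝ] ℝ) (hsym : ∀ u v : H, S u v = S v u)
    -- MI(S) is finite:
    (hfin : BddAbove {n : ℕ | ∃ W : Submodule ℝ H, Module.finrank ℝ W = n ∧
      ∀ u ∈ W, u ≠ 0 → S u u < 0})
    (n : ℕ) (u : Fin n → H) (φ : Fin n → (H →L[ℝ] ℝ))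
    (hu : ∀ i, S (u i) = φ i) (hind : LinearIndependent ℝ φ)
    (M : Matrix (Fin n) (Fin n) ℝ) (hM : M = fun i j => S (u i) (u j))
    (hHerm : M.IsHermitian)
    (c : ℕ) (hc : c = Fintype.card {i : Fin n // hHerm.eigenvalues i ≤ 0}) :
    morseIndexOn S (⨅ i, LinearMap.ker (φ i : H →ₗ[ℝ] ℝ)) = morseIndex S - c ∧
      c ≤ morseIndex S := by
  classical
  set G : Submodule ℝ H := ⨅ i, LinearMap.ker (φ i : H →ₗ[ℝ] ℝ) with hGdef
  set lam : Fin n → ℝ := hHerm.eigenvalues with hlam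
  set e : Fin n → Fin n → ℝ := fun k i => hHerm.eigenvectorBasis k i with he
  set z : Fin n → H := fun k => ∑ i, e k i • u i with hz
  -- basic eigenvector identities
  have hMz : ∀ l i, ∑ j, M i j * e l j = lam l * e l i := by
    intro l i
    have h := congrFun (hHerm.mulVec_eigenvectorBasis l) i
    simpa [Matrix.mulVec, dotProduct, e, lam] using h
  have horth : ∀ k l, ∑ i, e k i * e l i = if k = l then 1 else 0 := by
    intro k l
    have h := orthonormal_iff_ite.1 hHerm.eigenvectorBasis.orthonormal k l
    simpa [PiLp.inner_apply, RCLike.inner_apply, e, mul_comm] using h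
  have hcol : ∀ i j, ∑ k, e k i * e k j = if i = j then 1 else 0 := by
    intro i j
    have h := hHerm.eigenvectorBasis.sum_repr' (EuclideanSpace.single j (1:ℝ))
    have h2 := congrFun (congrArg (fun x : EuclideanSpace ℝ (Fin n) => (x : Fin n → ℝ)) h) i
    simp only [EuclideanSpace.inner_single_right, EuclideanSpace.single_apply,
      map_one, one_mul, conj_trivial] at h2
    calc ∑ k, e k i * e k j
        = (∑ x, (hHerm.eigenvectorBasis x j) • hHerm.eigenvectorBasis x) i := by
          rw [WithLp.ofLp_sum, Finset.sum_apply]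
          apply Finset.sum_congr rfl
          intro k _
          simp [e, PiLp.smul_apply, smul_eq_mul]
          ring
      _ = if i = j then 1 else 0 := h2
  -- S (z k) expanded in terms of the constraints
  have hSz : ∀ (k : Fin n) (x : H), S (z k) x = ∑ i, e k i * φ i x := by
    intro k x
    rw [hz]
    simp only [map_sum, map_smul, ContinuousLinearMap.sum_apply,
      ContinuousLinearMap.smul_apply, smul_eq_mul]
    apply Finset.sum_congr rfl
    intro i _
    rw [hu i]
  have hMsym : ∀ i j, S (u i) (u j) = M i j := by
    intro i j; rw [hM]
  have hzz : ∀ k l, S (z k) (z l) = if k = l then lam l else 0 := by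
    intro k l
    have h1 : ∀ i, φ i (z l) = ∑ j, M i j * e l j := by
      intro i
      rw [hz]
      simp only [map_sum, map_smul, smul_eq_mul]
      apply Finset.sum_congr rfl
      intro j _
      rw [← hu i, hMsym i j]
      ring
    rw [hSz]
    have h2 : ∑ i, e k i * φ i (z l) = lam l * ∑ i, e k i * e l i := by
      rw [Finset.mul_sum]
      apply Finset.sum_congr rfl
      intro i _
      rw [h1 i, hMz l i]
      ring
    rw [h2, horth k l]
    by_cases h : k = l <;> simp [h]
  -- linear independence of the z-functionals
  have hzi : LinearIndependent ℝ (fun k => S (z k)) := by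
    rw [Fintype.linearIndependent_iff]
    intro g hg
    have hco : ∀ i, ∑ k, g k * e k i = 0 := by
      have hsum : ∑ i, (∑ k, g k * e k i) • φ i = 0 := by
        ext x
        have h0 := congrFun (congrArg (fun (f : H →L[ℝ] ℝ) => (f : H → ℝ)) hg) x
        simp only [ContinuousLinearMap.coe_sum', Finset.sum_apply,
          ContinuousLinearMap.coe_smul', Pi.smul_apply, smul_eq_mul,
          ContinuousLinearMap.coe_zero, Pi.zero_apply] at h0
        simp only [ContinuousLinearMap.sum_apply, ContinuousLinearMap.smul_apply,
          smul_eq_mul, ContinuousLinearMap.zero_apply]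
        calc ∑ i, (∑ k, g k * e k i) * φ i x
            = ∑ i, ∑ k, g k * e k i * φ i x := by
              apply Finset.sum_congr rfl; intro i _; rw [Finset.sum_mul]
          _ = ∑ k, ∑ i, g k * e k i * φ i x := Finset.sum_comm
          _ = ∑ k, g k * S (z k) x := by
              apply Finset.sum_congr rfl; intro k _
              rw [hSz, Finset.mul_sum]
              apply Finset.sum_congr rfl; intro i _; ring
          _ = 0 := h0
      exact Fintype.linearIndependent_iff.1 hind _ hsum
    intro k0
    have h3 : g k0 = ∑ i, (∑ k, g k * e k i) * e k0 i := by
      symm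
      calc ∑ i, (∑ k, g k * e k i) * e k0 i
          = ∑ i, ∑ k, g k * e k i * e k0 i := by
            apply Finset.sum_congr rfl; intro i _; rw [Finset.sum_mul]
        _ = ∑ k, ∑ i, g k * e k i * e k0 i := Finset.sum_comm
        _ = ∑ k, g k * (if k = k0 then 1 else 0) := by
            apply Finset.sum_congr rfl; intro k _
            rw [show (fun i => g k * e k i * e k0 i) = (fun i => g k * (e k i * e k0 i))
              from funext fun i => by ring]
            rw [← Finset.mul_sum, horth k k0]
        _ = g k0 := by simp [Finset.sum_ite_eq']
    rw [h3]
    simp only [hco, zero_mul, Finset.sum_const_zero]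
  -- characterization of G
  have hG : ∀ v : H, v ∈ G ↔ ∀ k, S (z k) v = 0 := by
    intro v
    rw [hGdef]
    simp only [Submodule.mem_iInf, LinearMap.mem_ker]
    constructor
    · intro hv k
      rw [hSz]
      have : ∀ i, φ i v = 0 := hv
      simp [this]
    · intro hv i
      have h1 : ∑ k, e k i * S (z k) v = φ i v := by
        have : ∀ k, e k i * S (z k) v = ∑ j, e k i * e k j * φ j v := by
          intro k
          rw [hSz, Finset.mul_sum]
          apply Finset.sum_congr rfl
          intro j _
          ring
        rw [Finset.sum_congr rfl (fun k _ => this k), Finset.sum_comm]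
        have h2 : ∀ j, ∑ k, e k i * e k j * φ j v = (if i = j then 1 else 0) * φ j v := by
          intro j
          rw [← Finset.sum_mul, hcol i j]
        rw [Finset.sum_congr rfl (fun j _ => h2 j)]
        simp [Finset.sum_ite_eq]
      rw [ContinuousLinearMap.coe_coe, ← h1]
      simp [hv]
  -- the sets A and B
  set A : Set ℕ := {m : ℕ | ∃ W : Submodule ℝ H, Module.finrank ℝ W = m ∧
      ∀ u ∈ W, u ≠ 0 → S u u < 0} with hA
  set B : Set ℕ := {m : ℕ | ∃ W : Submodule ℝ H, W ≤ G ∧ Module.finrank ℝ W = m ∧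
      ∀ u ∈ W, u ≠ 0 → S u u < 0} with hB
  have hBsubA : B ⊆ A := by
    rintro m ⟨W, _, h2, h3⟩
    exact ⟨W, h2, h3⟩
  have hfinB : BddAbove B := hfin.mono hBsubA
  have hA0 : 0 ∈ A := ⟨⊥, finrank_bot ℝ H, fun x hx _ => absurd ((Submodule.mem_bot ℝ).1 hx) (by simp_all)⟩
  have hB0 : 0 ∈ B := ⟨⊥, bot_le, finrank_bot ℝ H, fun x hx _ => absurd ((Submodule.mem_bot ℝ).1 hx) (by simp_all)⟩
  have hcard : Fintype.card {k : Fin n // lam k ≤ 0} = c := by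
    rw [hc]
  -- sSup B + c ∈ A
  have hmem1 : sSup B + c ∈ A := by
    obtain ⟨W, hWG, hWrank, hWneg⟩ := Nat.sSup_mem ⟨0, hB0⟩ hfinB
    haveI := negdef_fd S hfin W hWneg
    have hzisub : LinearIndependent ℝ (fun k : {k : Fin n // lam k ≤ 0} => S (z k.1)) :=
      hzi.comp Subtype.val Subtype.val_injective
    obtain ⟨W', hW'neg, hW'rank⟩ := step_ge S hsym z lam hzz hzisub G
      (fun v hv => (hG v).1 hv) W hWG hWneg
    exact ⟨W', by rw [hW'rank, hWrank, hcard], hW'neg⟩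
  -- every element of A is at most sSup B + c
  have hle2 : ∀ m ∈ A, m ≤ sSup B + c := by
    rintro m ⟨W, hWrank, hWneg⟩
    haveI := negdef_fd S hfin W hWneg
    obtain ⟨W', hW'G, hW'neg, hW'rank⟩ := step_le S hsym z lam hzz G hG W hWneg
    have hmem : Module.finrank ℝ W' ∈ B := ⟨W', hW'G, rfl, hW'neg⟩
    have h1 : Module.finrank ℝ W' ≤ sSup B := le_csSup hfinB hmem
    rw [hcard] at hW'rank
    omega
  have hsum : sSup A = sSup B + c :=
    le_antisymm (csSup_le ⟨0, hA0⟩ hle2) (le_csSup hfin hmem1)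
  have hmon : morseIndexOn S G = sSup B := rfl
  have hmi : morseIndex S = sSup A := by
    rw [morseIndex, morseIndexOn]
    congr 1
    ext m
    constructor
    · rintro ⟨W, -, h2, h3⟩; exact ⟨W, h2, h3⟩
    · rintro ⟨W, h2, h3⟩; exact ⟨W, le_top, h2, h3⟩
  rw [hmon, hmi, hsum]
  omega
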